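/- For two consecutive intervals in the same level, the gap of postorder ordinal numbers satisfies t^ℓ(j) := a^ℓ(j) − a^ℓ(j−1) − 1 = m(j) + 2^{N−ℓ+1} − 2 for all 1 ≤ j ≤ 2^ℓ − 1, where m(j) is the 2-adic valuation of j when j is even and m(j) = 0 when j is odd. -/

import Mathlib

open Finset

/-- The set of dyadic intervals in `[0,1]` of length `≥ 2^{-N}`, encoded as
pairs `(ℓ, k)` with `ℓ ≤ N` and `k < 2^ℓ`, representing `I_{ℓ,k} = [k/2^ℓ, (k+1)/2^ℓ)`. -/
def DN (N : ℕ) : Finset (ℕ × ℕ) :=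
  (Finset.range (N + 1) ×ˢ Finset.range (2 ^ N)).filter fun p => p.2 < 2 ^ p.1

/-- `subInt q p` means the dyadic interval encoded by `q` is contained in the one
encoded by `p`. -/
def subInt (q p : ℕ × ℕ) : Prop := p.1 ≤ q.1 ∧ q.2 / 2 ^ (q.1 - p.1) = p.2

instance (q p : ℕ × ℕ) : Decidable (subInt q p) :=
  inferInstanceAs (Decidable (_ ∧ _))

/-- Postorder on dyadic intervals: `q ⪯ p` iff `q ⊆ p`, or they are disjoint with
`q` to the left of `p`. -/
def postLE (q p : ℕ × ℕ) : Prop :=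
  subInt q p ∨ (q.2 + 1) * 2 ^ p.1 ≤ p.2 * 2 ^ q.1

instance (q p : ℕ × ℕ) : Decidable (postLE q p) :=
  inferInstanceAs (Decidable (_ ∨ _))

/-- Lexicographic order: first by level, then by position. -/
def lexLE (q p : ℕ × ℕ) : Prop := q.1 < p.1 ∨ (q.1 = p.1 ∧ q.2 ≤ p.2)

instance (q p : ℕ × ℕ) : Decidable (lexLE q p) :=
  inferInstanceAs (Decidable (_ ∨ _))

/-- Postorder ordinal number (starting at 1) of the interval `p` in `D_N`. -/
def postOrdinal (N : ℕ) (p : ℕ × ℕ) : ℕ :=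
  ((DN N).filter fun q => postLE q p).card

/-- Lexicographic ordinal number (starting at 1) of the interval `p` in `D_N`. -/
def lexOrdinal (N : ℕ) (p : ℕ × ℕ) : ℕ :=
  ((DN N).filter fun q => lexLE q p).card

lemma sum_ite_count (M c : ℕ) (h : c ≤ M) (P : ℕ → Prop) [DecidablePred P]
    (hP : ∀ k, P k ↔ k < c) :
    (∑ k ∈ Finset.range M, if P k then 1 else 0) = c := by
  rw [← Finset.card_filter]
  have : (Finset.range M).filter P = Finset.range c := by
    ext k
    simp only [Finset.mem_filter, Finset.mem_range, hP]
    omega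
  rw [this, Finset.card_range]

lemma two_pow_geom (n : ℕ) : ∑ i ∈ Finset.range n, 2 ^ i = 2 ^ n - 1 := by
  induction n with
  | zero => simp
  | succ n ih =>
    rw [Finset.sum_range_succ, ih, pow_succ]
    have := Nat.one_le_two_pow (n := n)
    omega

lemma postOrdinal_formula (N ℓ j : ℕ) (hℓ : ℓ ≤ N) (hj : j < 2 ^ ℓ) :
    postOrdinal N (ℓ, j)
      = (∑ i ∈ Finset.range ℓ, j / 2 ^ (i + 1)) + (j + 1) * (2 ^ (N - ℓ + 1) - 1) := by
  rw [postOrdinal, DN, Finset.filter_filter, Finset.card_filter, Finset.sum_product]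
  have hmain : ∀ m ∈ Finset.range (N + 1),
      (∑ k ∈ Finset.range (2 ^ N),
          if (m, k).2 < 2 ^ (m, k).1 ∧ postLE (m, k) (ℓ, j) then 1 else 0)
        = if m < ℓ then j / 2 ^ (ℓ - m) else (j + 1) * 2 ^ (m - ℓ) := by
    intro m hm
    simp only [Finset.mem_range] at hm
    by_cases hcase : m < ℓ
    · rw [if_pos hcase]
      have hpos : 0 < 2 ^ (ℓ - m) := Nat.pow_pos (by norm_num)
      have hpow : 2 ^ (ℓ - m) * 2 ^ m = 2 ^ ℓ := by
        rw [← pow_add]; congr 1; omega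
      have hdle : j / 2 ^ (ℓ - m) < 2 ^ m := by
        rw [Nat.div_lt_iff_lt_mul hpos]
        calc j < 2 ^ ℓ := hj
        _ = 2 ^ m * 2 ^ (ℓ - m) := by rw [← hpow]; ring
      apply sum_ite_count
      · calc j / 2 ^ (ℓ - m) ≤ j := Nat.div_le_self _ _
        _ ≤ 2 ^ N := le_of_lt (lt_of_lt_of_le hj (Nat.pow_le_pow_right (by norm_num) hℓ))
      · intro k
        constructor
        · rintro ⟨hk, h | h⟩
          · exact absurd h.1 (by omega)
          · simp only at h
            have h2 : (k + 1) * 2 ^ (ℓ - m) ≤ j := by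
              have : (k + 1) * 2 ^ (ℓ - m) * 2 ^ m ≤ j * 2 ^ m := by
                rw [mul_assoc, hpow]; exact h
              exact Nat.le_of_mul_le_mul_right this (Nat.pow_pos (by norm_num))
            have := (Nat.le_div_iff_mul_le hpos).2 h2
            omega
        · intro hk
          have h2 : (k + 1) * 2 ^ (ℓ - m) ≤ j := (Nat.le_div_iff_mul_le hpos).1 (by omega)
          refine ⟨show k < 2 ^ m by omega, Or.inr ?_⟩
          show (k + 1) * 2 ^ ℓ ≤ j * 2 ^ m
          calc (k + 1) * 2 ^ ℓ = (k + 1) * 2 ^ (ℓ - m) * 2 ^ m := by rw [mul_assoc, hpow]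
          _ ≤ j * 2 ^ m := Nat.mul_le_mul_right _ h2
    · rw [if_neg hcase]
      have hle : ℓ ≤ m := by omega
      have hpos : 0 < 2 ^ (m - ℓ) := Nat.pow_pos (by norm_num)
      have hpow : 2 ^ (m - ℓ) * 2 ^ ℓ = 2 ^ m := by
        rw [← pow_add]; congr 1; omega
      have hbd : (j + 1) * 2 ^ (m - ℓ) ≤ 2 ^ m := by
        calc (j + 1) * 2 ^ (m - ℓ) ≤ 2 ^ ℓ * 2 ^ (m - ℓ) := Nat.mul_le_mul_right _ (by omega)
        _ = 2 ^ m := by rw [← hpow]; ring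
      apply sum_ite_count
      · exact le_trans hbd (Nat.pow_le_pow_right (by norm_num) (by omega : m ≤ N))
      · intro k
        have hleft : (k + 1) * 2 ^ ℓ ≤ j * 2 ^ m ↔ k + 1 ≤ j * 2 ^ (m - ℓ) := by
          constructor
          · intro h
            have : (k + 1) * 2 ^ ℓ ≤ j * 2 ^ (m - ℓ) * 2 ^ ℓ := by
              rw [mul_assoc, hpow]; exact h
            exact Nat.le_of_mul_le_mul_right this (Nat.pow_pos (by norm_num))
          · intro h
            calc (k + 1) * 2 ^ ℓ ≤ j * 2 ^ (m - ℓ) * 2 ^ ℓ := Nat.mul_le_mul_right _ h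
            _ = j * 2 ^ m := by rw [mul_assoc, hpow]
        have hsub : k / 2 ^ (m - ℓ) = j ↔ j * 2 ^ (m - ℓ) ≤ k ∧ k < (j + 1) * 2 ^ (m - ℓ) := by
          constructor
          · intro h
            constructor
            · calc j * 2 ^ (m - ℓ) = k / 2 ^ (m - ℓ) * 2 ^ (m - ℓ) := by rw [h]
              _ ≤ k := Nat.div_mul_le_self _ _
            · rw [← Nat.div_lt_iff_lt_mul hpos]; omega
          · rintro ⟨h1, h2⟩
            have ha : j ≤ k / 2 ^ (m - ℓ) := (Nat.le_div_iff_mul_le hpos).2 h1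
            have hb : k / 2 ^ (m - ℓ) < j + 1 := (Nat.div_lt_iff_lt_mul hpos).2 h2
            omega
        constructor
        · rintro ⟨hk, h | h⟩
          · have := hsub.1 h.2
            omega
          · simp only at h
            have := hleft.1 h
            have : k < j * 2 ^ (m - ℓ) := by omega
            calc k < j * 2 ^ (m - ℓ) := this
            _ ≤ (j + 1) * 2 ^ (m - ℓ) := Nat.mul_le_mul_right _ (by omega)
        · intro hk
          refine ⟨show k < 2 ^ m by omega, ?_⟩
          by_cases hge : j * 2 ^ (m - ℓ) ≤ k
          · exact Or.inl ⟨hle, hsub.2 ⟨hge, hk⟩⟩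
          · exact Or.inr (hleft.2 (by omega))
  rw [Finset.sum_congr rfl hmain]
  have hsplit : N + 1 = ℓ + (N - ℓ + 1) := by omega
  rw [hsplit, Finset.sum_range_add]
  congr 1
  · rw [← Finset.sum_range_reflect]
    apply Finset.sum_congr rfl
    intro m hm
    simp only [Finset.mem_range] at hm
    rw [if_pos (by omega)]
    congr 2
    omega
  · have : ∀ i ∈ Finset.range (N - ℓ + 1),
        (if ℓ + i < ℓ then j / 2 ^ (ℓ - (ℓ + i)) else (j + 1) * 2 ^ (ℓ + i - ℓ))
          = (j + 1) * 2 ^ i := by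
      intro i _
      rw [if_neg (by omega)]
      congr 2
      omega
    rw [Finset.sum_congr rfl this, ← Finset.mul_sum, two_pow_geom]

lemma sum_div_succ (ℓ j : ℕ) (hj1 : 1 ≤ j) (hj : j < 2 ^ ℓ) :
    (∑ i ∈ Finset.range ℓ, j / 2 ^ (i + 1))
      = (∑ i ∈ Finset.range ℓ, (j - 1) / 2 ^ (i + 1)) + padicValNat 2 j := by
  have hj0 : j ≠ 0 := by omega
  have hv : padicValNat 2 j < ℓ := by
    have hd : 2 ^ padicValNat 2 j ∣ j := pow_padicValNat_dvd
    have h1 : 2 ^ padicValNat 2 j ≤ j := Nat.le_of_dvd (by omega) hd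
    have : (2 : ℕ) ^ padicValNat 2 j < 2 ^ ℓ := lt_of_le_of_lt h1 hj
    exact (Nat.pow_lt_pow_iff_right (by norm_num)).1 this
  have hdvd : ∀ i : ℕ, 2 ^ (i + 1) ∣ j ↔ i < padicValNat 2 j := by
    intro i
    rw [← Nat.factorization_def j Nat.prime_two,
      Nat.Prime.pow_dvd_iff_le_factorization Nat.prime_two hj0]
    omega
  have key : ∀ i ∈ Finset.range ℓ, j / 2 ^ (i + 1)
      = (j - 1) / 2 ^ (i + 1) + if 2 ^ (i + 1) ∣ j then 1 else 0 := by
    intro i _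
    conv_lhs => rw [show j = (j - 1) + 1 by omega]
    rw [Nat.succ_div, show j - 1 + 1 = j by omega]
  rw [Finset.sum_congr rfl key, Finset.sum_add_distrib]
  congr 1
  rw [← Finset.card_filter]
  have : (Finset.range ℓ).filter (fun i => 2 ^ (i + 1) ∣ j)
      = Finset.range (padicValNat 2 j) := by
    ext i
    simp only [Finset.mem_filter, Finset.mem_range, hdvd]
    omega
  rw [this, Finset.card_range]

/-- The gap of postorder ordinal numbers of two consecutive intervals in the same level:
`t^ℓ(j) = a^ℓ(j) - a^ℓ(j-1) - 1 = m(j) + 2^{N-ℓ+1} - 2`, where `m(j)` is the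
2-adic valuation of `j` (which is `0` for odd `j`). -/
theorem postOrdinal_gap (N ℓ j : ℕ) (hℓ : ℓ ≤ N) (hj1 : 1 ≤ j) (hj2 : j ≤ 2 ^ ℓ - 1) :
    postOrdinal N (ℓ, j) - postOrdinal N (ℓ, j - 1) - 1
      = padicValNat 2 j + 2 ^ (N - ℓ + 1) - 2 := by
  have h1 : (1 : ℕ) ≤ 2 ^ ℓ := Nat.one_le_two_pow
  have hj : j < 2 ^ ℓ := by omega
  have hj' : j - 1 < 2 ^ ℓ := by omega
  rw [postOrdinal_formula N ℓ j hℓ hj, postOrdinal_formula N ℓ (j - 1) hℓ hj',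
    sum_div_succ ℓ j hj1 hj, show j - 1 + 1 = j by omega]
  have hT : 2 ≤ 2 ^ (N - ℓ + 1) := by
    calc (2 : ℕ) = 2 ^ 1 := rfl
    _ ≤ 2 ^ (N - ℓ + 1) := Nat.pow_le_pow_right (by norm_num) (by omega)
  set T := 2 ^ (N - ℓ + 1) with hTdef
  set A := ∑ i ∈ Finset.range ℓ, (j - 1) / 2 ^ (i + 1) with hA
  set v := padicValNat 2 j with hv
  have hB : (j + 1) * (T - 1) = j * (T - 1) + (T - 1) := by ring
  rw [hB]
  omega
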